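/- Let α be a type with decidable equality and let F : Finset α → ℝ satisfy F(∅) = 0, be monotone (A ⊆ B implies F(A) ≤ F(B)), and be submodular (for all finite A ⊆ B and x ∉ B, F(B ∪ {x}) − F(B) ≤ F(A ∪ {x}) − F(A)). Let X be a finite subset of α, ε ∈ [0, 1), and let x : ℕ → α be a sequence with x(n+1) ∈ X for all n. Define T(0) = ∅ and T(n+1) = T(n) ∪ {x(n+1)}, and suppose each pick is (1−ε)-greedy: for every n and every z ∈ X, F(T(n) ∪ {x(n+1)}) − F(T(n)) ≥ (1 − ε) · (F(T(n) ∪ {z}) − F(T(n))). Then for every natural number k ≥ 1, every T* ⊆ X with |T*| = k, and every n, (1 − exp(−n · (1 − ε) / k)) · F(T*) ≤ F(T(n)). -/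

import Mathlib

/-- The paper's Theorem 3 (performance guarantee for the ε-greedy IA-SPA):
for a normalized, monotone, submodular set function `F`, the sets `T n`
produced by the `(1 − ε)`-greedy algorithm over a finite candidate set `X`
satisfy `(1 − e^{−n(1−ε)/k}) F T* ≤ F (T n)` for every `k`-element
`T* ⊆ X`. -/
theorem ia_spa_performance_guarantee
    {α : Type*} [DecidableEq α] (F : Finset α → ℝ)
    (hempty : F ∅ = 0)
    (hmono : ∀ A B : Finset α, A ⊆ B → F A ≤ F B)
    (hsub : ∀ A B : Finset α, A ⊆ B → ∀ x ∉ B,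
      F (insert x B) - F B ≤ F (insert x A) - F A)
    (X : Finset α) (ε : ℝ) (hε0 : 0 ≤ ε) (hε1 : ε < 1)
    (x : ℕ → α) (hxX : ∀ n, x (n + 1) ∈ X)
    (T : ℕ → Finset α) (hT0 : T 0 = ∅)
    (hTs : ∀ n, T (n + 1) = insert (x (n + 1)) (T n))
    (hgreedy : ∀ n, ∀ z ∈ X,
      F (insert (x (n + 1)) (T n)) - F (T n)
        ≥ (1 - ε) * (F (insert z (T n)) - F (T n))) :
    ∀ k : ℕ, 1 ≤ k → ∀ Tstar : Finset α, Tstar ⊆ X → Tstar.card = k →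
      ∀ n : ℕ, (1 - Real.exp (-((n : ℝ) * (1 - ε) / (k : ℝ)))) * F Tstar ≤ F (T n) := by
  intro k hk Tstar hTX hTk
  have hFstar0 : 0 ≤ F Tstar := by
    have := hmono ∅ Tstar (Finset.empty_subset _); linarith
  have h1ε : (0:ℝ) < 1 - ε := by linarith
  have hkpos : (0:ℝ) < (k:ℝ) := by exact_mod_cast hk
  set c : ℝ := (1 - ε) / k with hc
  have hc0 : 0 < c := div_pos h1ε hkpos
  have hc1 : c ≤ 1 := by
    rw [hc, div_le_one hkpos]
    have : (1:ℝ) ≤ (k:ℝ) := by exact_mod_cast hk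
    linarith
  -- telescoping lemma
  have tele : ∀ S A : Finset α, F (S ∪ A) - F A ≤ ∑ z ∈ S, (F (insert z A) - F A) := by
    intro S A
    induction S using Finset.induction_on with
    | empty => simp
    | @insert a S ha ih =>
      rw [Finset.sum_insert ha, Finset.insert_union]
      have h1 : F (insert a (S ∪ A)) - F (S ∪ A) ≤ F (insert a A) - F A := by
        by_cases haSA : a ∈ S ∪ A
        · rw [Finset.insert_eq_self.mpr haSA]
          have := hmono A (insert a A) (Finset.subset_insert _ _)
          linarith
        · exact hsub A (S ∪ A) Finset.subset_union_right a haSA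
      linarith
  -- nonnegativity of each greedy gain
  have hgain0 : ∀ n, 0 ≤ F (T (n + 1)) - F (T n) := by
    intro n
    obtain ⟨z₀, hz₀⟩ := Finset.card_pos.mp (by rw [hTk]; exact hk)
    have hz₀X := hTX hz₀
    have := hgreedy n z₀ hz₀X
    have hmon := hmono (T n) (insert z₀ (T n)) (Finset.subset_insert _ _)
    rw [hTs n]
    nlinarith
  -- key per-step inequality : c * (F Tstar - F (T n)) ≤ gain n
  have key : ∀ n, c * (F Tstar - F (T n)) ≤ F (T (n + 1)) - F (T n) := by
    intro n
    have h1 : F Tstar ≤ F (Tstar ∪ T n) := hmono _ _ Finset.subset_union_left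
    have h2 := tele Tstar (T n)
    have h3 : ∑ z ∈ Tstar, (F (insert z (T n)) - F (T n))
        ≤ ∑ _z ∈ Tstar, (F (T (n + 1)) - F (T n)) / (1 - ε) := by
      apply Finset.sum_le_sum
      intro z hz
      have := hgreedy n z (hTX hz)
      rw [le_div_iff₀ h1ε, hTs n]
      nlinarith
    rw [Finset.sum_const, hTk, nsmul_eq_mul] at h3
    have h4 : F Tstar - F (T n) ≤ (k:ℝ) * ((F (T (n + 1)) - F (T n)) / (1 - ε)) := by
      linarith
    have h5 := mul_le_mul_of_nonneg_left h4 hc0.le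
    calc c * (F Tstar - F (T n))
        ≤ c * ((k:ℝ) * ((F (T (n + 1)) - F (T n)) / (1 - ε))) := h5
      _ = F (T (n + 1)) - F (T n) := by
          rw [hc]; field_simp
  -- induction: F Tstar - F (T n) ≤ (1-c)^n * F Tstar
  have hrec : ∀ n, F Tstar - F (T n) ≤ (1 - c) ^ n * F Tstar := by
    intro n
    induction n with
    | zero => simp [hT0, hempty]
    | succ n ih =>
      have h1 : F Tstar - F (T (n + 1)) ≤ (1 - c) * (F Tstar - F (T n)) := by
        have := key n; nlinarith
      have h2 : (1 - c) * (F Tstar - F (T n)) ≤ (1 - c) * ((1 - c) ^ n * F Tstar) :=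
        mul_le_mul_of_nonneg_left ih (by linarith)
      calc F Tstar - F (T (n + 1)) ≤ (1 - c) * ((1 - c) ^ n * F Tstar) := le_trans h1 h2
        _ = (1 - c) ^ (n + 1) * F Tstar := by ring
  intro n
  have hpow : (1 - c) ^ n ≤ Real.exp (-((n : ℝ) * (1 - ε) / (k : ℝ))) := by
    have hbase : (1 - c) ≤ Real.exp (-c) := by
      have := Real.add_one_le_exp (-c); linarith
    have := pow_le_pow_left₀ (by linarith : (0:ℝ) ≤ 1 - c) hbase n
    calc (1 - c) ^ n ≤ (Real.exp (-c)) ^ n := this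
      _ = Real.exp ((n : ℝ) * (-c)) := by rw [← Real.exp_nat_mul]
      _ = Real.exp (-((n : ℝ) * (1 - ε) / (k : ℝ))) := by
          congr 1; rw [hc]; ring
  have := hrec n
  have h6 : (1 - c) ^ n * F Tstar ≤ Real.exp (-((n : ℝ) * (1 - ε) / (k : ℝ))) * F Tstar :=
    mul_le_mul_of_nonneg_right hpow hFstar0
  linarith
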